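/- Let C ⊆ {-1,1}^d be multi-connected, and suppose g ∈ C is such that every point of {-1,1}^d at Hamming distance 1 from g also lies in C, and moreover {-1,1}^d \ (C \ {g}) is nonempty with C \ {g} multi-connected. Then C = {-1,1}^d. -/
import Mathlib


/-- Two vertices of the hypercube `{-1,1}^d` (encoded by `Bool`s) are adjacent
iff they differ in exactly one coordinate. -/
def cubeAdj {d : ℕ} (x y : Fin d → Bool) : Prop := ∃! i, x i ≠ y i

/-- The face of the hypercube with free coordinates `free`, the other coordinates
being fixed to the values of `x0`. -/
def cubeFace {d : ℕ} (free : Finset (Fin d)) (x0 : Fin d → Bool) : Set (Fin d → Bool) :=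
  {x | ∀ i ∉ free, x i = x0 i}

/-- The vertices of `S` are pairwise connected by paths lying entirely inside `S`. -/
def ConnIn {d : ℕ} (S : Set (Fin d → Bool)) : Prop :=
  ∀ x ∈ S, ∀ y ∈ S, Relation.ReflTransGen (fun a b => b ∈ S ∧ cubeAdj a b) x y

/-- Conditions (2) and (3) of multi-connectivity: for every face `F` of the hypercube,
both `C ∩ F` and `F \ C` are connected by edges of `F`. -/
def FaceConds {d : ℕ} (C : Set (Fin d → Bool)) : Prop :=
  ∀ (free : Finset (Fin d)) (x0 : Fin d → Bool),
    ConnIn (C ∩ cubeFace free x0) ∧ ConnIn (cubeFace free x0 \ C)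

/-- `C ⊆ {-1,1}^d` is multi-connected: `C` is empty or some `g ∈ C` can be removed
leaving a multi-connected set, and for every face `F` both `C ∩ F` and `F \ C` are
connected inside `F`. -/
inductive MultiConnected {d : ℕ} : Set (Fin d → Bool) → Prop
  | empty : FaceConds (∅ : Set (Fin d → Bool)) → MultiConnected ∅
  | step (C : Set (Fin d → Bool)) (g : Fin d → Bool) (hg : g ∈ C)
      (h : MultiConnected (C \ {g})) (hf : FaceConds C) : MultiConnected C

open Classical in
/-- The involution of the hypercube mapping each vertex of the face to its antipode
within the face, and fixing all vertices outside the face. -/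
noncomputable def flipFace {d : ℕ} (free : Finset (Fin d)) (x0 : Fin d → Bool)
    (x : Fin d → Bool) : Fin d → Bool :=
  if x ∈ cubeFace free x0 then (fun i => if i ∈ free then !(x i) else x i) else x

/-- `C ⊆ {-1,1}^d` is lopsided (totally asymmetric): whenever the antipodal involution
of a face preserves `C`, the face is fully contained in `C` or disjoint from `C`. -/
def Lopsided {d : ℕ} (C : Set (Fin d → Bool)) : Prop :=
  ∀ (free : Finset (Fin d)) (x0 : Fin d → Bool),
    flipFace free x0 '' C = C → (C ∩ cubeFace free x0 = ∅ ∨ cubeFace free x0 ⊆ C)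


lemma MultiConnected.faceConds {d : ℕ} {S : Set (Fin d → Bool)}
    (h : MultiConnected S) : FaceConds S := by
  cases h with
  | empty hf => exact hf
  | step C g hg h hf => exact hf

/-- If `C` is multi-connected, `g ∈ C` has all its Hamming-distance-1 neighbours in `C`,
the complement of `C \ {g}` is nonempty and `C \ {g}` is multi-connected, then `C` is
the full cube. -/
theorem multiConnected_full_of_all_neighbors {d : ℕ} (C : Set (Fin d → Bool))
    (hC : MultiConnected C) (g : Fin d → Bool) (hg : g ∈ C)
    (hnb : ∀ x, cubeAdj g x → x ∈ C)
    (hne : (Set.univ \ (C \ {g})).Nonempty)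
    (hC' : MultiConnected (C \ {g})) :
    C = Set.univ := by
  ext z
  simp only [Set.mem_univ, iff_true]
  by_contra hz
  have hface : cubeFace (Finset.univ : Finset (Fin d)) g = Set.univ := by
    ext x; simp [cubeFace]
  have hconn := (hC'.faceConds Finset.univ g).2
  have hgS : g ∈ cubeFace (Finset.univ : Finset (Fin d)) g \ (C \ {g}) := by
    rw [hface]; exact ⟨trivial, fun h => h.2 rfl⟩
  have hzS : z ∈ cubeFace (Finset.univ : Finset (Fin d)) g \ (C \ {g}) := by
    rw [hface]; exact ⟨trivial, fun h => hz h.1⟩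
  have hpath := hconn g hgS z hzS
  rcases hpath.cases_head with heq | ⟨b, ⟨hbS, hadj⟩, _⟩
  · exact hz (heq ▸ hg)
  · have hbC : b ∈ C := hnb b hadj
    have hbg : b = g := by
      by_contra hbg
      exact hbS.2 ⟨hbC, hbg⟩
    subst hbg
    obtain ⟨i, hi, -⟩ := hadj
    exact hi rfl
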